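/- arXiv:1905.07525 — 2 statements merged into one kernel-verified Lean document; each statement's English description precedes it below -/
import Mathlib

section
/- Let α, β > 0 and f(ζ) = 2/(α + √(α² + 4βζ)). Then for any vector v in ℝⁿ, the equation α·w + β·‖w‖·w = v has the unique solution w = f(‖v‖)·v. -/
theorem stmt3 (n : ℕ) (α β : ℝ) (hα : 0 < α) (hβ : 0 < β)
    (f : ℝ → ℝ) (hf : f = fun ζ => 2 / (α + Real.sqrt (α ^ 2 + 4 * β * ζ)))
    (v : EuclideanSpace ℝ (Fin n)) :
    (α • (f ‖v‖ • v) + (β * ‖f ‖v‖ • v‖) • (f ‖v‖ • v) = v) ∧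
    (∀ w : EuclideanSpace ℝ (Fin n),
      α • w + (β * ‖w‖) • w = v → w = f ‖v‖ • v) := by
  subst hf
  simp only
  set s := Real.sqrt (α ^ 2 + 4 * β * ‖v‖) with hs_def
  have hs2 : s ^ 2 = α ^ 2 + 4 * β * ‖v‖ := Real.sq_sqrt (by positivity)
  have hs0 : 0 ≤ s := Real.sqrt_nonneg _
  have hden : 0 < α + s := by linarith
  set c := 2 / (α + s) with hc_def
  have hc0 : 0 < c := by positivity
  have hnorm : ‖c • v‖ = c * ‖v‖ := by
    rw [norm_smul, Real.norm_eq_abs, abs_of_pos hc0]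
  have hkey : α * c + β * (c * ‖v‖) * c = 1 := by
    rw [hc_def]; field_simp; nlinarith [hs2]
  constructor
  · rw [hnorm, smul_smul, smul_smul, ← add_smul, hkey, one_smul]
  · intro w hw
    have hv : v = (α + β * ‖w‖) • w := by
      rw [← hw, add_smul]
    have hpos : 0 < α + β * ‖w‖ := by positivity
    have hnv : ‖v‖ = (α + β * ‖w‖) * ‖w‖ := by
      rw [hv, norm_smul, Real.norm_eq_abs, abs_of_pos hpos]
    have hsval : s = α + 2 * β * ‖w‖ := by
      rw [hs_def]
      have h2 : α ^ 2 + 4 * β * ‖v‖ = (α + 2 * β * ‖w‖) ^ 2 := by rw [hnv]; ring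
      rw [h2, Real.sqrt_sq (by positivity)]
    have hone : c * (α + β * ‖w‖) = 1 := by
      rw [hc_def, hsval]; field_simp; ring
    rw [hv, smul_smul, hone, one_smul]
end

section
/- Let α, β > 0 and f(ζ) = 2/(α + √(α² + 4βζ)). For any two vectors η₁, η₂ ∈ ℝⁿ, (f(‖η₁‖)η₁ − f(‖η₂‖)η₂) · (η₁ − η₂) ≥ (1/2)·f(max(‖η₁‖, ‖η₂‖))·‖η₁ − η₂‖². -/
open scoped RealInnerProductSpace

lemma stmt7_aux (α β : ℝ) (hα : 0 < α) (hβ : 0 < β) (a b t : ℝ)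
    (hb : 0 ≤ b) (hab : b ≤ a) (ht : t ≤ a * b) :
    2 / (α + Real.sqrt (α ^ 2 + 4 * β * a)) * a ^ 2
      + 2 / (α + Real.sqrt (α ^ 2 + 4 * β * b)) * b ^ 2
      - (2 / (α + Real.sqrt (α ^ 2 + 4 * β * a)) + 2 / (α + Real.sqrt (α ^ 2 + 4 * β * b))) * t
    ≥ (1 / 2) * (2 / (α + Real.sqrt (α ^ 2 + 4 * β * a))) * (a ^ 2 + b ^ 2 - 2 * t) := by
  have ha : 0 ≤ a := hb.trans hab
  set A := Real.sqrt (α ^ 2 + 4 * β * a) with hAdef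
  set B := Real.sqrt (α ^ 2 + 4 * β * b) with hBdef
  have hA0 : 0 ≤ A := Real.sqrt_nonneg _
  have hB0 : 0 ≤ B := Real.sqrt_nonneg _
  have hA2 : A ^ 2 = α ^ 2 + 4 * β * a := by
    rw [hAdef, Real.sq_sqrt]; nlinarith
  have hB2 : B ^ 2 = α ^ 2 + 4 * β * b := by
    rw [hBdef, Real.sq_sqrt]; nlinarith
  have hBα : α ≤ B := by nlinarith
  have hAα : α ≤ A := by nlinarith
  have hdA : 0 < α + A := by linarith
  have hdB : 0 < α + B := by linarith
  -- key: (a+b) * B ≥ 2 * b * A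
  have hkey : 2 * b * A ≤ (a + b) * B := by
    have h1 : 2 * b * A = Real.sqrt ((2 * b * A) ^ 2) := by
      rw [Real.sqrt_sq (by positivity)]
    have h2 : (a + b) * B = Real.sqrt (((a + b) * B) ^ 2) := by
      rw [Real.sqrt_sq (by positivity)]
    rw [h1, h2]
    apply Real.sqrt_le_sqrt
    have : (2 * b * A) ^ 2 = 4 * b ^ 2 * (α ^ 2 + 4 * β * a) := by
      rw [mul_pow, mul_pow, hA2]; ring
    have h4 : ((a + b) * B) ^ 2 = (a + b) ^ 2 * (α ^ 2 + 4 * β * b) := by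
      rw [mul_pow, hB2]
    rw [this, h4]
    nlinarith [mul_nonneg (mul_nonneg (sub_nonneg.2 hab) (by linarith : (0:ℝ) ≤ a + 3 * b)) (sq_nonneg α),
      mul_nonneg (mul_nonneg hβ.le hb) (sq_nonneg (a - b))]
  -- hence fa * (a+b) ≥ 2 * fb * b
  have hfab : 2 * (2 / (α + B)) * b ≤ (2 / (α + A)) * (a + b) := by
    rw [show 2 * (2 / (α + B)) * b = 4 * b / (α + B) by ring,
      show (2 / (α + A)) * (a + b) = 2 * (a + b) / (α + A) by ring,
      div_le_div_iff₀ hdB hdA]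
    nlinarith [mul_nonneg (sub_nonneg.2 hab) hα.le]
  have hfa0 : 0 < 2 / (α + A) := by positivity
  have hfb0 : 0 < 2 / (α + B) := by positivity
  have h1 : 0 ≤ (2 / (α + B)) * (a * b - t) := mul_nonneg hfb0.le (by linarith)
  have h2 : 0 ≤ (a - b) * ((2 / (α + A)) * (a + b) - 2 * (2 / (α + B)) * b) :=
    mul_nonneg (by linarith) (by linarith)
  nlinarith [h1, h2]

theorem stmt7 (n : ℕ) (α β : ℝ) (hα : 0 < α) (hβ : 0 < β)
    (f : ℝ → ℝ) (hf : f = fun ζ => 2 / (α + Real.sqrt (α ^ 2 + 4 * β * ζ)))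
    (η₁ η₂ : EuclideanSpace ℝ (Fin n)) :
    ⟪f ‖η₁‖ • η₁ - f ‖η₂‖ • η₂, η₁ - η₂⟫
      ≥ (1 / 2) * f (max ‖η₁‖ ‖η₂‖) * ‖η₁ - η₂‖ ^ 2 := by
  have expand : ⟪f ‖η₁‖ • η₁ - f ‖η₂‖ • η₂, η₁ - η₂⟫
      = f ‖η₁‖ * ‖η₁‖ ^ 2 + f ‖η₂‖ * ‖η₂‖ ^ 2 - (f ‖η₁‖ + f ‖η₂‖) * ⟪η₁, η₂⟫ := by
    simp only [inner_sub_left, inner_sub_right, real_inner_smul_left,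
      real_inner_self_eq_norm_sq, real_inner_comm η₂ η₁]
    ring
  have hnorm : ‖η₁ - η₂‖ ^ 2 = ‖η₁‖ ^ 2 + ‖η₂‖ ^ 2 - 2 * ⟪η₁, η₂⟫ := by
    rw [@norm_sub_sq_real]; ring
  rw [expand, hnorm, hf]
  simp only
  rcases le_total ‖η₂‖ ‖η₁‖ with h | h
  · rw [max_eq_left h]
    exact stmt7_aux α β hα hβ ‖η₁‖ ‖η₂‖ ⟪η₁, η₂⟫ (norm_nonneg _) h (real_inner_le_norm _ _)
  · rw [max_eq_right h]
    have := stmt7_aux α β hα hβ ‖η₂‖ ‖η₁‖ ⟪η₁, η₂⟫ (norm_nonneg _) h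
      (by rw [real_inner_comm] at *; exact (real_inner_le_norm η₂ η₁))
    linarith
end
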